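/- Let N be a single-qubit quantum channel of the form N(ρ) = U N'(V ρ V†) U† with U,V ∈ U(2) and N' the normal-form map with parameters (D,t), and let D_s be a unitary 2-design on 2×2 unitary matrices. Then for every nonempty A ⊆ {1,…,n} and every Hermitian O_A = Σ_{P∈P_n, supp(P)=A} a_P P: E_{W∼D_s^{⊗n}} ‖N^{†⊗n}(W† O_A W)‖_F² = ((‖D‖₂² + ‖t‖₂²)/3)^{|A|} · ‖O_A‖_F², where ‖D‖₂² = D_X²+D_Y²+D_Z² and ‖t‖₂² = t_X²+t_Y²+t_Z². -/

import Mathlib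

open scoped Kronecker
open Matrix
open scoped ComplexOrder

noncomputable section

abbrev QMat := Matrix (Fin 2) (Fin 2) ℂ

abbrev NMat (n : ℕ) := Matrix (Fin n → Fin 2) (Fin n → Fin 2) ℂ

/-- The four single-qubit Pauli matrices `I, X, Y, Z`. -/
def pauli : Fin 4 → QMat :=
  ![1, !![0, 1; 1, 0], !![0, -Complex.I; Complex.I, 0], !![1, 0; 0, -1]]

/-- The non-identity Paulis `X, Y, Z`. -/
def pauliXYZ (i : Fin 3) : QMat := pauli i.succ

/-- The `n`-qubit Pauli string indexed by `s : Fin n → Fin 4`. -/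
def pauliString {n : ℕ} (s : Fin n → Fin 4) : NMat n :=
  Matrix.of fun i j => ∏ k, pauli (s k) (i k) (j k)

/-- Support of a Pauli string. -/
def psupp {n : ℕ} (s : Fin n → Fin 4) : Finset (Fin n) :=
  Finset.univ.filter fun k => s k ≠ 0

/-- The observable with real Pauli coefficients `a`. -/
def obsOf {n : ℕ} (a : (Fin n → Fin 4) → ℝ) : NMat n :=
  ∑ s : Fin n → Fin 4, (a s : ℂ) • pauliString s

/-- Normalized Frobenius norm squared, `‖M‖_F² = Tr[Mᴴ M]/dim`. -/
def frobSq {m : Type*} [Fintype m] (M : Matrix m m ℂ) : ℝ :=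
  (Matrix.trace (Mᴴ * M)).re / (Fintype.card m : ℝ)

def IsUnitary {m : Type*} [Fintype m] [DecidableEq m] (U : Matrix m m ℂ) : Prop :=
  U * Uᴴ = 1 ∧ Uᴴ * U = 1

/-- Hilbert–Schmidt adjoint of a (linear) map on matrices:
`Φ†(A) i j = conj (Tr[Aᴴ Φ(E_{ij})])`. -/
def hsAdj {m : Type*} [Fintype m] [DecidableEq m]
    (Φ : Matrix m m ℂ → Matrix m m ℂ) (A : Matrix m m ℂ) : Matrix m m ℂ :=
  Matrix.of fun i j => (starRingEnd ℂ) (Matrix.trace (Aᴴ * Φ (Matrix.single i j 1)))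

/-- Pauli transfer matrix entry of a single-qubit map. -/
def ptm (Φ : QMat → QMat) (a b : Fin 4) : ℂ :=
  Matrix.trace (pauli a * Φ (pauli b)) / 2

/-- Tensor product `Φ 0 ⊗ Φ 1 ⊗ ⋯ ⊗ Φ (n-1)` of single-qubit (linear) maps,
defined via the Pauli transfer matrices. -/
def tensorMap {n : ℕ} (Φ : Fin n → QMat → QMat) (M : NMat n) : NMat n :=
  ∑ s : Fin n → Fin 4, ∑ t : Fin n → Fin 4,
    ((∏ k, ptm (Φ k) (s k) (t k)) * (Matrix.trace (pauliString t * M) / ((2 : ℂ) ^ n))) •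
      pauliString s

/-- `n`-fold tensor power `Φ^{⊗n}` of a single-qubit (linear) map. -/
def tensorPow (n : ℕ) (Φ : QMat → QMat) : NMat n → NMat n :=
  tensorMap fun _ => Φ

/-- Tensor product of `n` single-qubit matrices. -/
def qprod {n : ℕ} (V : Fin n → QMat) : NMat n :=
  Matrix.of fun i j => ∏ k, V k (i k) (j k)

/-- The single-qubit normal-form map `N'` with parameters `(D, t)`:
`N'(I) = I + Σ t_i σ_i` and `N'(σ_i) = D_i σ_i`. -/
def normalForm (D t : Fin 3 → ℝ) (M : QMat) : QMat :=
  (Matrix.trace M / 2) • (1 + ∑ i, (t i : ℂ) • pauliXYZ i) +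
    ∑ i, ((D i : ℂ) * (Matrix.trace (pauliXYZ i * M) / 2)) • pauliXYZ i

/-- `Υ(D,t) = max_{‖a‖₂=1} Σ_i a_i² D_i² + (Σ_i a_i t_i)²`. -/
def Upsilon (D t : Fin 3 → ℝ) : ℝ :=
  sSup { r : ℝ | ∃ a : Fin 3 → ℝ, (∑ i, a i ^ 2) = 1 ∧
    r = (∑ i, a i ^ 2 * D i ^ 2) + (∑ i, a i * t i) ^ 2 }

/-- Choi matrix of a single-qubit map. -/
def choi (Φ : QMat → QMat) : Matrix (Fin 2 × Fin 2) (Fin 2 × Fin 2) ℂ :=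
  Matrix.of fun p q => Φ (Matrix.single p.1 q.1 1) p.2 q.2

/-- A single-qubit quantum channel: linear, trace preserving, completely positive. -/
structure IsChannel (Φ : QMat → QMat) : Prop where
  linear : IsLinearMap ℂ Φ
  tracePreserving : ∀ M, Matrix.trace (Φ M) = Matrix.trace M
  completelyPositive : (choi Φ).PosSemidef

/-- Unitary 1-design (finitely supported distribution). -/
def IsOneDesign {ι : Type*} [Fintype ι] (w : ι → ℝ) (W : ι → QMat) : Prop :=
  ∀ M : QMat, ∑ i, (w i : ℂ) • (W i * M * (W i)ᴴ) = (Matrix.trace M / 2) • (1 : QMat)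

/-- The swap (flip) operator on two qubits. -/
def swapOp : Matrix (Fin 2 × Fin 2) (Fin 2 × Fin 2) ℂ :=
  Matrix.of fun p q => if p.1 = q.2 ∧ p.2 = q.1 then 1 else 0

/-- Unitary 2-design: the twirl of any `M` matches the Haar value
`c_I • 1 + c_F • F` (closed form of the Haar average on `U(2)`). -/
def IsTwoDesign {ι : Type*} [Fintype ι] (w : ι → ℝ) (W : ι → QMat) : Prop :=
  ∀ M : Matrix (Fin 2 × Fin 2) (Fin 2 × Fin 2) ℂ,
    ∑ i, (w i : ℂ) • ((W i ⊗ₖ W i) * M * (W i ⊗ₖ W i)ᴴ) =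
      ((Matrix.trace M - Matrix.trace (swapOp * M) / 2) / 3) •
          (1 : Matrix (Fin 2 × Fin 2) (Fin 2 × Fin 2) ℂ) +
        ((Matrix.trace (swapOp * M) - Matrix.trace M / 2) / 3) • swapOp

/-- `η`-approximate scrambler (finitely supported distribution over `U(2)`). -/
def IsApproxScrambler {ι : Type*} [Fintype ι] (η : ℝ) (w : ι → ℝ) (U : ι → QMat) : Prop :=
  (∀ a b : Fin 4, a ≠ b →
      ∑ i, (w i : ℂ) • (((U i)ᴴ * pauli a * U i) ⊗ₖ ((U i)ᴴ * pauli b * U i)) = 0) ∧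
    ∀ a b : Fin 3,
      ∑ i, w i * ((Matrix.trace (pauliXYZ a * U i * pauliXYZ b * (U i)ᴴ)).re / 2) ^ 2 ≤
        (1 + 2 * η) / 3

/-- Locally unbiased distribution over linear maps on `n`-qubit matrices. -/
def LocallyUnbiased (n : ℕ) {ι : Type*} [Fintype ι] (w : ι → ℝ)
    (C : ι → NMat n → NMat n) : Prop :=
  ∃ (m : ℕ) (v : Fin n → Fin m → ℝ) (W : Fin n → Fin m → QMat),
    (∀ j k, 0 ≤ v j k) ∧ (∀ j, ∑ k, v j k = 1) ∧ (∀ j k, IsUnitary (W j k)) ∧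
      (∀ j, IsOneDesign (v j) (W j)) ∧
      ∀ A B : NMat n,
        ∑ i, (w i : ℂ) • (C i A ⊗ₖ C i B) =
          ∑ i, ∑ f : Fin n → Fin m,
            ((w i * ∏ j, v j (f j) : ℝ) : ℂ) •
              (C i (qprod (fun j => W j (f j)) * A * (qprod fun j => W j (f j))ᴴ) ⊗ₖ
                C i (qprod (fun j => W j (f j)) * B * (qprod fun j => W j (f j))ᴴ))

/-- Pauli-invariant distribution over linear maps on `n`-qubit matrices. -/
def PauliInvariant (n : ℕ) {ι : Type*} [Fintype ι] (w : ι → ℝ)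
    (C : ι → NMat n → NMat n) : Prop :=
  ∀ A B : NMat n,
    ∑ i, (w i : ℂ) • (C i A ⊗ₖ C i B) =
      ((4 : ℂ) ^ n)⁻¹ • ∑ r : Fin n → Fin 4, ∑ i, (w i : ℂ) •
        (C i (pauliString r * A * pauliString r) ⊗ₖ C i (pauliString r * B * pauliString r))

/-- Fourier coefficient `Φ_γ(C) = Π_j 2^{-n} Tr[P_j C_j(P_{j-1})]` of a Pauli path. -/
def pathCoeff {n L : ℕ} (Cs : Fin L → NMat n → NMat n)
    (γ : Fin (L + 1) → Fin n → Fin 4) : ℂ :=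
  ∏ j : Fin L,
    (Matrix.trace (pauliString (γ j.succ) * Cs j (pauliString (γ j.castSucc))) / ((2 : ℂ) ^ n))

/-- Path weight `|γ| = Σ_{j=1}^L |P_j|`. -/
def pathWeight {n L : ℕ} (γ : Fin (L + 1) → Fin n → Fin 4) : ℕ :=
  ∑ j : Fin L, (psupp (γ j.succ)).card

/-- The (non-physical) map `Ñ_p` with `Ñ_p(I) = (N(I) - pI)/(1-p)` and
`Ñ_p(σ) = N(σ)/(1-p)` for `σ ∈ {X,Y,Z}`. -/
def tildeMap (N : QMat → QMat) (p : ℝ) (M : QMat) : QMat :=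
  (Matrix.trace M / 2) • (((1 : ℂ) - (p : ℂ))⁻¹ • (N 1 - (p : ℂ) • (1 : QMat))) +
    ∑ i : Fin 3, (Matrix.trace (pauliXYZ i * M) / 2) • (((1 : ℂ) - (p : ℂ))⁻¹ • N (pauliXYZ i))

/-- The layers of an `L`-layered noisy circuit: `C_j(ρ) = N^{⊗n}(U_j ρ U_j†)` for `j < L`,
and the last layer is followed by the single-qubit layer `V`. -/
def layerMaps {n L : ℕ} (Nm : QMat → QMat) (U : Fin L → NMat n) (Vt : NMat n)
    (j : Fin L) (ρ : NMat n) : NMat n :=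
  if j.val = L - 1 then Vt * tensorPow n Nm (U j * ρ * (U j)ᴴ) * Vtᴴ
  else tensorPow n Nm (U j * ρ * (U j)ᴴ)

/-- Composition `C_L ∘ ⋯ ∘ C_1` of the layers. -/
def circuitOf {n L : ℕ} (lm : Fin L → NMat n → NMat n) (ρ : NMat n) : NMat n :=
  (List.finRange L).foldl (fun σ j => lm j σ) ρ

/-- Operator (spectral) norm of a matrix, as the `ℓ²→ℓ²` operator norm. -/
def specNorm {m : Type*} [Fintype m] (M : Matrix m m ℂ) : ℝ :=
  Real.sqrt (sSup { r : ℝ | ∃ v : m → ℂ,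
    (∑ x, Complex.normSq (v x)) = 1 ∧ r = ∑ x, Complex.normSq (M.mulVec v x) })

/-- Trace norm `‖M‖₁ = Tr √(Mᴴ M)` (sum of singular values). -/
def traceNorm {m : Type*} [Fintype m] [DecidableEq m] (M : Matrix m m ℂ) : ℝ :=
  (Matrix.trace ((Matrix.posSemidef_conjTranspose_mul_self M).1.eigenvectorUnitary.1 *
    Matrix.diagonal ((fun x : ℝ => (x : ℂ)) ∘ (Real.sqrt ·) ∘ (Matrix.posSemidef_conjTranspose_mul_self M).1.eigenvalues) *
    (star (Matrix.posSemidef_conjTranspose_mul_self M).1.eigenvectorUnitary : Matrix m m ℂ))).re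

set_option maxHeartbeats 1000000 in
lemma pauli_herm (a : Fin 4) : (pauli a)ᴴ = pauli a := by
  fin_cases a <;> simp [pauli] <;> ext i j <;> fin_cases i <;> fin_cases j <;>
    simp [Matrix.conjTranspose_apply]

set_option maxHeartbeats 1000000 in
lemma trace_pauli_mul (a b : Fin 4) :
    Matrix.trace (pauli a * pauli b) = if a = b then 2 else 0 := by
  fin_cases a <;> fin_cases b <;>
    simp [pauli, Matrix.trace_fin_two, Matrix.mul_apply, Fin.sum_univ_two, Complex.ext_iff] <;>
    norm_num

lemma trace_pauli (a : Fin 4) : Matrix.trace (pauli a) = if a = 0 then 2 else 0 := by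
  fin_cases a <;> simp [pauli, Matrix.trace_fin_two]

set_option maxHeartbeats 1000000 in
lemma pauli_complete (M : QMat) :
    ∑ a : Fin 4, (Matrix.trace (pauli a * M) / 2) • pauli a = M := by
  ext i j
  fin_cases i <;> fin_cases j <;>
    simp [Fin.sum_univ_four, pauli, Matrix.trace_fin_two, Matrix.mul_apply,
      Fin.sum_univ_two] <;> ring_nf <;> simp [Complex.I_sq] <;> ring

set_option maxHeartbeats 1000000 in
lemma pauli_pair (M M' : QMat) :
    ∑ a : Fin 4, (Matrix.trace (pauli a * M) / 2) * (starRingEnd ℂ) (Matrix.trace (pauli a * M') / 2)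
      = Matrix.trace (M'ᴴ * M) / 2 := by
  simp only [Fin.sum_univ_four, pauli, Matrix.trace_fin_two, Matrix.mul_apply,
    Fin.sum_univ_two, Matrix.conjTranspose_apply, Matrix.cons_val', Matrix.cons_val_zero,
    Matrix.cons_val_one, Matrix.head_cons, Matrix.head_fin_const, Matrix.empty_val',
    Matrix.cons_val_fin_one, map_add, _root_.map_mul, map_div₀, map_ofNat, map_neg, map_sub,
    Complex.conj_I, Matrix.one_apply]
  simp [Matrix.one_apply]
  ring_nf
  simp [Complex.I_sq]
  ring

lemma qprod_mul {n : ℕ} (A B : Fin n → QMat) :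
    qprod A * qprod B = qprod (fun k => A k * B k) := by
  ext i j
  simp only [Matrix.mul_apply, qprod, Matrix.of_apply]
  rw [Fintype.prod_sum (fun k y => A k (i k) y * B k y (j k))]
  exact Finset.sum_congr rfl fun x _ => (Finset.prod_mul_distrib).symm

lemma qprod_trace {n : ℕ} (A : Fin n → QMat) :
    Matrix.trace (qprod A) = ∏ k, Matrix.trace (A k) := by
  have : ∀ k, Matrix.trace (A k) = ∑ y : Fin 2, A k y y := fun k => rfl
  simp only [this]
  rw [Fintype.prod_sum (fun k y => A k y y)]
  rfl

lemma qprod_conjT {n : ℕ} (A : Fin n → QMat) :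
    (qprod A)ᴴ = qprod (fun k => (A k)ᴴ) := by
  ext i j
  simp [qprod, Matrix.conjTranspose_apply, map_prod]

lemma pauliString_eq_qprod {n : ℕ} (s : Fin n → Fin 4) :
    pauliString s = qprod (fun k => pauli (s k)) := rfl

lemma pauliString_herm {n : ℕ} (s : Fin n → Fin 4) : (pauliString s)ᴴ = pauliString s := by
  rw [pauliString_eq_qprod, qprod_conjT]
  simp only [pauli_herm]

lemma trace_pauliString_mul {n : ℕ} (s t : Fin n → Fin 4) :
    Matrix.trace (pauliString s * pauliString t) = if s = t then (2 : ℂ) ^ n else 0 := by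
  rw [pauliString_eq_qprod, pauliString_eq_qprod, qprod_mul, qprod_trace]
  simp only [trace_pauli_mul]
  by_cases h : s = t
  · subst h; simp
  · rw [if_neg h]
    obtain ⟨k, hk⟩ := Function.ne_iff.mp h
    exact Finset.prod_eq_zero (Finset.mem_univ k) (by simp [hk])

lemma card_nfun (n : ℕ) : (Fintype.card (Fin n → Fin 2) : ℝ) = 2 ^ n := by
  simp

lemma trace_pauli_sum {n : ℕ} (c d : (Fin n → Fin 4) → ℂ) :
    Matrix.trace ((∑ s : Fin n → Fin 4, c s • pauliString s)ᴴ *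
        (∑ s : Fin n → Fin 4, d s • pauliString s)) =
      (2 : ℂ) ^ n * ∑ s : Fin n → Fin 4, (starRingEnd ℂ) (c s) * d s := by
  rw [Matrix.conjTranspose_sum]
  simp only [Matrix.conjTranspose_smul, pauliString_herm, Matrix.sum_mul, Matrix.mul_sum,
    Matrix.smul_mul, Matrix.mul_smul, Matrix.trace_sum, Matrix.trace_smul, smul_smul,
    smul_eq_mul, trace_pauliString_mul, Complex.star_def]
  rw [Finset.mul_sum]
  refine Finset.sum_congr rfl fun s _ => ?_
  rw [Finset.sum_eq_single s (by intro t _ ht; simp [ht]) (by simp)]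
  simp; ring

lemma frobSq_pauli_sum {n : ℕ} (c : (Fin n → Fin 4) → ℂ) :
    frobSq (∑ s : Fin n → Fin 4, c s • pauliString s) =
      (∑ s : Fin n → Fin 4, (starRingEnd ℂ) (c s) * c s).re := by
  rw [frobSq, trace_pauli_sum, card_nfun]
  have : ((2 : ℂ) ^ n) = (((2 : ℝ) ^ n : ℝ) : ℂ) := by push_cast; ring
  rw [this, Complex.re_ofReal_mul]
  field_simp

lemma kron_conjT (A B : QMat) : (A ⊗ₖ B)ᴴ = Aᴴ ⊗ₖ Bᴴ := by
  ext ⟨i,j⟩ ⟨k,l⟩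
  simp [Matrix.conjTranspose_apply, Matrix.kroneckerMap_apply]

lemma trace_kron_swap (A B : QMat) :
    Matrix.trace ((A ⊗ₖ B) * swapOp) = Matrix.trace (A * B) := by
  simp [Matrix.trace, Matrix.mul_apply, Fintype.sum_prod_type, Fin.sum_univ_two,
    swapOp, Matrix.kroneckerMap_apply, Matrix.diag]
  try ring

lemma trace_swap_kron (A B : QMat) :
    Matrix.trace (swapOp * (A ⊗ₖ B)) = Matrix.trace (A * B) := by
  rw [Matrix.trace_mul_comm, trace_kron_swap]

lemma pauli_conj_entry (a : Fin 4) (i j : Fin 2) :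
    (starRingEnd ℂ) (pauli a i j) = pauli a j i := by
  have h := congrFun (congrFun (pauli_herm a) j) i
  simpa [Matrix.conjTranspose_apply] using h

lemma pauli_zero_eq_one : pauli 0 = (1 : QMat) := rfl

lemma trace_stdBasis (i j : Fin 2) :
    Matrix.trace (Matrix.single i j (1:ℂ)) = if i = j then 1 else 0 := by
  fin_cases i <;> fin_cases j <;>
    simp [Matrix.trace, Matrix.diag, Matrix.single, Fin.sum_univ_two] <;> decide

lemma hsAdj_one (N : QMat → QMat) (htp : ∀ M, Matrix.trace (N M) = Matrix.trace M) :
    hsAdj N (pauli 0) = 1 := by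
  ext i j
  simp only [hsAdj, Matrix.of_apply, pauli_zero_eq_one, Matrix.conjTranspose_one,
    Matrix.one_mul, htp, trace_stdBasis, Matrix.one_apply]
  split <;> simp

lemma N_decomp (N : QMat → QMat) (hlin : IsLinearMap ℂ N) (M : QMat) :
    N M = ∑ i : Fin 2, ∑ j : Fin 2, M i j • N (Matrix.single i j 1) := by
  let L : QMat →ₗ[ℂ] QMat := IsLinearMap.mk' N hlin
  show L M = ∑ i : Fin 2, ∑ j : Fin 2, M i j • L (Matrix.single i j 1)
  conv_lhs => rw [Matrix.matrix_eq_sum_single M]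
  rw [map_sum]
  refine Finset.sum_congr rfl fun i _ => ?_
  rw [map_sum]
  refine Finset.sum_congr rfl fun j _ => ?_
  have h1 : Matrix.single i j (M i j) = M i j • Matrix.single i j (1:ℂ) := by
    simp
  rw [h1, L.map_smul]

lemma ptm_hsAdj (N : QMat → QMat) (hlin : IsLinearMap ℂ N) (b t : Fin 4) :
    ptm (hsAdj N) b t = (starRingEnd ℂ) (ptm N t b) := by
  unfold ptm
  rw [map_div₀, map_ofNat]
  congr 1
  have hL : Matrix.trace (pauli b * hsAdj N (pauli t)) =
      ∑ i : Fin 2, ∑ j : Fin 2, pauli b i j *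
        (starRingEnd ℂ) (Matrix.trace (pauli t * N (Matrix.single j i 1))) := by
    simp only [Matrix.trace, Matrix.diag, Matrix.mul_apply, hsAdj, Matrix.of_apply,
      pauli_herm]
  rw [hL, N_decomp N hlin (pauli b), Matrix.mul_sum, Matrix.trace_sum]
  simp only [Matrix.mul_sum, Matrix.trace_sum, Matrix.mul_smul, Matrix.trace_smul,
    smul_eq_mul, map_sum, _root_.map_mul, pauli_conj_entry]
  rw [Finset.sum_comm]

set_option maxHeartbeats 2000000 in
lemma nf_parseval (D τ : Fin 3 → ℝ) :
    ∑ y : Fin 4, ∑ x : Fin 4,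
        (starRingEnd ℂ) (ptm (normalForm D τ) x y) * ptm (normalForm D τ) x y =
      1 + ((((∑ i, D i ^ 2) + ∑ i, τ i ^ 2 : ℝ)) : ℂ) := by
  have hval : ∀ x y : Fin 4, ptm (normalForm D τ) x y =
      ![![1, 0, 0, 0], ![(τ 0 : ℂ), (D 0 : ℂ), 0, 0], ![(τ 1 : ℂ), 0, (D 1 : ℂ), 0],
        ![(τ 2 : ℂ), 0, 0, (D 2 : ℂ)]] x y := by
    intro x y
    fin_cases x <;> fin_cases y <;>
      simp (config := { decide := true }) [ptm, normalForm, pauliXYZ, Matrix.mul_add,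
        Matrix.mul_smul, Matrix.mul_sum,
        Matrix.mul_one, Matrix.trace_add, Matrix.trace_smul, Matrix.trace_sum, smul_eq_mul,
        trace_pauli, trace_pauli_mul, Fin.sum_univ_three, Matrix.vecHead, Matrix.vecTail]
  simp only [hval, Fin.sum_univ_four]
  simp (config := { decide := true }) [Complex.conj_ofReal, Fin.sum_univ_three, Matrix.vecHead, Matrix.vecTail]
  push_cast
  ring

/-- PTM of conjugation `ρ ↦ U ρ Uᴴ`. -/
def cptm (U : QMat) (t x : Fin 4) : ℂ :=
  Matrix.trace (pauli t * (U * pauli x * Uᴴ)) / 2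

lemma IsUnitary.conjT {U : QMat} (hU : IsUnitary U) : IsUnitary Uᴴ :=
  ⟨by simpa using hU.2, by simpa using hU.1⟩

lemma cptm_ortho (U : QMat) (hU : IsUnitary U) (x x' : Fin 4) :
    ∑ t : Fin 4, (starRingEnd ℂ) (cptm U t x) * cptm U t x' =
      if x = x' then 1 else 0 := by
  have hMH : (U * pauli x * Uᴴ)ᴴ * (U * pauli x' * Uᴴ) = U * pauli x * pauli x' * Uᴴ := by
    simp only [Matrix.conjTranspose_mul, Matrix.conjTranspose_conjTranspose, pauli_herm,
      Matrix.mul_assoc]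
    rw [← Matrix.mul_assoc Uᴴ U, hU.2, Matrix.one_mul]
  have htr : Matrix.trace ((U * pauli x * Uᴴ)ᴴ * (U * pauli x' * Uᴴ)) =
      if x = x' then 2 else 0 := by
    rw [hMH, Matrix.trace_mul_cycle]
    rw [show Uᴴ * (U * pauli x) * pauli x' = Uᴴ * U * (pauli x * pauli x') by
      simp only [Matrix.mul_assoc]]
    rw [hU.2, Matrix.one_mul, trace_pauli_mul]
  calc ∑ t : Fin 4, (starRingEnd ℂ) (cptm U t x) * cptm U t x'
      = ∑ t : Fin 4, cptm U t x' * (starRingEnd ℂ) (cptm U t x) :=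
        Finset.sum_congr rfl fun t _ => mul_comm _ _
    _ = Matrix.trace ((U * pauli x * Uᴴ)ᴴ * (U * pauli x' * Uᴴ)) / 2 := pauli_pair _ _
    _ = if x = x' then 1 else 0 := by rw [htr]; split <;> norm_num

lemma cptm_flip (V : QMat) (hV : IsUnitary V) (y b : Fin 4) :
    cptm V y b = cptm Vᴴ b y := by
  unfold cptm
  simp only [Matrix.conjTranspose_conjTranspose]
  congr 1
  rw [show pauli y * (V * pauli b * Vᴴ) = pauli y * V * pauli b * Vᴴ by
        simp only [Matrix.mul_assoc],
    Matrix.trace_mul_comm,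
    show Vᴴ * (pauli y * V * pauli b) = Vᴴ * pauli y * V * pauli b by
        simp only [Matrix.mul_assoc],
    Matrix.trace_mul_comm]

lemma cptm_ortho' (V : QMat) (hV : IsUnitary V) (y y' : Fin 4) :
    ∑ b : Fin 4, cptm V y b * (starRingEnd ℂ) (cptm V y' b) =
      if y = y' then 1 else 0 := by
  have h := cptm_ortho Vᴴ hV.conjT y' y
  simp only [← cptm_flip V hV] at h
  calc ∑ b : Fin 4, cptm V y b * (starRingEnd ℂ) (cptm V y' b)
      = ∑ b : Fin 4, (starRingEnd ℂ) (cptm V y' b) * cptm V y b :=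
        Finset.sum_congr rfl fun b _ => mul_comm _ _
    _ = if y' = y then 1 else 0 := by
        rw [← h]
    _ = if y = y' then 1 else 0 := by rcases eq_or_ne y y' with h | h <;> simp [h, Ne.symm]

set_option maxHeartbeats 1000000 in
lemma ptmN_decomp (D τ : Fin 3 → ℝ) (U V : QMat) (hU : IsUnitary U) (hV : IsUnitary V)
    (N : QMat → QMat) (hlin : IsLinearMap ℂ N)
    (hNform : ∀ ρ, N ρ = U * normalForm D τ (V * ρ * Vᴴ) * Uᴴ) (t b : Fin 4) :
    ptm N t b = ∑ y : Fin 4, (∑ x : Fin 4, cptm U t x * ptm (normalForm D τ) x y) *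
      cptm V y b := by
  have hN' : ∀ Q, normalForm D τ Q = Uᴴ * N (Vᴴ * Q * V) * U := by
    intro Q
    have h1 : V * (Vᴴ * Q * V) * Vᴴ = Q := by
      simp only [← Matrix.mul_assoc, hV.1, Matrix.one_mul]
      rw [Matrix.mul_assoc, hV.1, Matrix.mul_one]
    rw [hNform (Vᴴ * Q * V), h1]
    simp only [← Matrix.mul_assoc, hU.2, Matrix.one_mul]
    rw [Matrix.mul_assoc, hU.2, Matrix.mul_one]
  have hNF_sum : ∀ c : Fin 4 → ℂ, normalForm D τ (∑ y, c y • pauli y) =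
      ∑ y, c y • normalForm D τ (pauli y) := by
    intro c
    rw [hN']
    have h2 : Vᴴ * (∑ y, c y • pauli y) * V = ∑ y, c y • (Vᴴ * pauli y * V) := by
      simp [Matrix.mul_sum, Matrix.sum_mul, Matrix.mul_smul, Matrix.smul_mul]
    rw [h2]
    have h3 : N (∑ y, c y • (Vᴴ * pauli y * V)) = ∑ y, c y • N (Vᴴ * pauli y * V) := by
      let L : QMat →ₗ[ℂ] QMat := IsLinearMap.mk' N hlin
      show L _ = _
      rw [map_sum]
      exact Finset.sum_congr rfl fun y _ => L.map_smul _ _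
    rw [h3]
    simp only [Matrix.mul_sum, Matrix.sum_mul, Matrix.mul_smul, Matrix.smul_mul]
    exact Finset.sum_congr rfl fun y _ => by rw [hN' (pauli y)]
  have hNdec : N (pauli b) =
      ∑ y, ∑ x, (cptm V y b * ptm (normalForm D τ) x y) • (U * pauli x * Uᴴ) := by
    rw [hNform]
    have h4 : V * pauli b * Vᴴ = ∑ y, cptm V y b • pauli y := by
      unfold cptm
      exact (pauli_complete (V * pauli b * Vᴴ)).symm
    rw [h4, hNF_sum]
    have h5 : ∀ y, normalForm D τ (pauli y) = ∑ x, ptm (normalForm D τ) x y • pauli x := by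
      intro y
      exact (pauli_complete (normalForm D τ (pauli y))).symm
    simp only [h5, Matrix.mul_sum, Matrix.sum_mul, Matrix.mul_smul, Matrix.smul_mul,
      Finset.smul_sum, smul_smul]
  show Matrix.trace (pauli t * N (pauli b)) / 2 = _
  rw [hNdec]
  simp only [Matrix.mul_sum, Matrix.trace_sum, Matrix.mul_smul, Matrix.trace_smul,
    smul_eq_mul, Finset.sum_div, Finset.sum_mul, Finset.mul_sum]
  refine Finset.sum_congr rfl fun y _ => Finset.sum_congr rfl fun x _ => ?_
  unfold cptm
  ring

set_option maxHeartbeats 1000000 in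
lemma ptmN_sumsq (D τ : Fin 3 → ℝ) (U V : QMat) (hU : IsUnitary U) (hV : IsUnitary V)
    (N : QMat → QMat) (hlin : IsLinearMap ℂ N)
    (hNform : ∀ ρ, N ρ = U * normalForm D τ (V * ρ * Vᴴ) * Uᴴ) :
    ∑ t : Fin 4, ∑ b : Fin 4, (starRingEnd ℂ) (ptm N t b) * ptm N t b =
      1 + ((((∑ i, D i ^ 2) + ∑ i, τ i ^ 2 : ℝ)) : ℂ) := by
  have hPM : Matrix.of (fun t b => ptm N t b) =
      Matrix.of (cptm U) * Matrix.of (fun x y => ptm (normalForm D τ) x y) * Matrix.of (cptm V)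
      := by
    ext t b
    rw [Matrix.of_apply, ptmN_decomp D τ U V hU hV N hlin hNform t b]
    simp only [Matrix.mul_apply, Matrix.of_apply]
  have hQ : (Matrix.of (cptm U))ᴴ * Matrix.of (cptm U) = 1 := by
    ext x x'
    simp only [Matrix.mul_apply, Matrix.conjTranspose_apply, Matrix.of_apply,
      Matrix.one_apply, Complex.star_def]
    rw [cptm_ortho U hU x x']
  have hR : Matrix.of (cptm V) * (Matrix.of (cptm V))ᴴ = 1 := by
    ext y y'
    simp only [Matrix.mul_apply, Matrix.conjTranspose_apply, Matrix.of_apply,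
      Matrix.one_apply, Complex.star_def]
    rw [cptm_ortho' V hV y y']
  set QM := Matrix.of (cptm U)
  set RM := Matrix.of (cptm V)
  set PiM := Matrix.of (fun x y => ptm (normalForm D τ) x y)
  have key : ∑ t : Fin 4, ∑ b : Fin 4, (starRingEnd ℂ) (ptm N t b) * ptm N t b =
      Matrix.trace ((QM * PiM * RM)ᴴ * (QM * PiM * RM)) := by
    rw [← hPM]
    simp only [Matrix.trace, Matrix.diag, Matrix.mul_apply, Matrix.conjTranspose_apply,
      Matrix.of_apply, Complex.star_def]
    exact Finset.sum_comm
  rw [key]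
  have e1 : (QM * PiM * RM)ᴴ * (QM * PiM * RM) = RMᴴ * (PiMᴴ * PiM) * RM := by
    simp only [Matrix.conjTranspose_mul, Matrix.mul_assoc]
    rw [← Matrix.mul_assoc QMᴴ QM, hQ, Matrix.one_mul]
  rw [e1, Matrix.trace_mul_cycle, ← Matrix.mul_assoc, hR, Matrix.one_mul]
  have e2 : Matrix.trace (PiMᴴ * PiM) =
      ∑ y : Fin 4, ∑ x : Fin 4, (starRingEnd ℂ) (ptm (normalForm D τ) x y) *
        ptm (normalForm D τ) x y := by
    simp only [Matrix.trace, Matrix.diag, Matrix.mul_apply, Matrix.conjTranspose_apply,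
      PiM, Matrix.of_apply, Complex.star_def]
  rw [e2]
  exact nf_parseval D τ

/-- Entry `Tr[P_t Wᴴ P_u W]/2` of the PTM of conjugation by `Wᴴ`. -/
def sE (W : QMat) (t u : Fin 4) : ℂ :=
  Matrix.trace (pauli t * (Wᴴ * pauli u * W)) / 2

lemma conj_sE (W : QMat) (t u : Fin 4) :
    (starRingEnd ℂ) (sE W t u) = Matrix.trace ((Wᴴ * pauli u * W) * pauli t) / 2 := by
  unfold sE
  rw [map_div₀, map_ofNat]
  congr 1
  have h1 : (starRingEnd ℂ) (Matrix.trace (pauli t * (Wᴴ * pauli u * W))) =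
      Matrix.trace ((pauli t * (Wᴴ * pauli u * W))ᴴ) := by
    rw [Matrix.trace_conjTranspose]; rfl
  rw [h1]
  congr 1
  simp only [Matrix.conjTranspose_mul, Matrix.conjTranspose_conjTranspose, pauli_herm]
  simp only [← Matrix.mul_assoc]

set_option maxHeartbeats 1000000 in
lemma design_pair {ι : Type*} [Fintype ι] (w : ι → ℝ) (W : ι → QMat)
    (h2 : IsTwoDesign w W) (t t' u u' : Fin 4) :
    ∑ i, (w i : ℂ) * (sE (W i) t u * (starRingEnd ℂ) (sE (W i) t' u')) =
      ((4 * ((if t = 0 then (1:ℂ) else 0) * (if t' = 0 then (1:ℂ) else 0)) -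
          (if t = t' then (1:ℂ) else 0)) / 3) *
        ((if u = 0 then (1:ℂ) else 0) * (if u' = 0 then (1:ℂ) else 0)) +
      (((if t = t' then (1:ℂ) else 0) -
          (if t = 0 then (1:ℂ) else 0) * (if t' = 0 then (1:ℂ) else 0)) / 3) *
        (if u = u' then (1:ℂ) else 0) := by
  have hterm : ∀ i, sE (W i) t u * (starRingEnd ℂ) (sE (W i) t' u') =
      Matrix.trace ((pauli u ⊗ₖ pauli u') *
        ((W i ⊗ₖ W i) * (pauli t ⊗ₖ pauli t') * (W i ⊗ₖ W i)ᴴ)) / 4 := by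
    intro i
    rw [conj_sE]
    have h1 : sE (W i) t u = Matrix.trace (((W i)ᴴ * pauli u * W i) * pauli t) / 2 := by
      unfold sE; rw [Matrix.trace_mul_comm]
    rw [h1, div_mul_div_comm, ← Matrix.trace_kronecker]
    norm_num
    simp only [Matrix.mul_kronecker_mul]
    rw [← kron_conjT]
    -- now cyclic permutation
    rw [show (W i ⊗ₖ W i)ᴴ * (pauli u ⊗ₖ pauli u') * (W i ⊗ₖ W i) * (pauli t ⊗ₖ pauli t')
        = (W i ⊗ₖ W i)ᴴ * ((pauli u ⊗ₖ pauli u') * ((W i ⊗ₖ W i) * (pauli t ⊗ₖ pauli t')))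
        from by simp only [Matrix.mul_assoc]]
    rw [Matrix.trace_mul_comm]
    simp only [Matrix.mul_assoc]
  simp only [hterm]
  have hsum : ∑ i, (w i : ℂ) * (Matrix.trace ((pauli u ⊗ₖ pauli u') *
        ((W i ⊗ₖ W i) * (pauli t ⊗ₖ pauli t') * (W i ⊗ₖ W i)ᴴ)) / 4) =
      Matrix.trace ((pauli u ⊗ₖ pauli u') *
        (∑ i, (w i : ℂ) • ((W i ⊗ₖ W i) * (pauli t ⊗ₖ pauli t') * (W i ⊗ₖ W i)ᴴ))) / 4 := by
    rw [Matrix.mul_sum, Matrix.trace_sum, Finset.sum_div]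
    refine Finset.sum_congr rfl fun i _ => ?_
    rw [Matrix.mul_smul, Matrix.trace_smul, smul_eq_mul]
    ring
  rw [hsum, h2 (pauli t ⊗ₖ pauli t')]
  have htk : Matrix.trace (pauli t ⊗ₖ pauli t') =
      (if t = 0 then (2:ℂ) else 0) * (if t' = 0 then (2:ℂ) else 0) := by
    rw [Matrix.trace_kronecker, trace_pauli, trace_pauli]
  have hts : Matrix.trace (swapOp * (pauli t ⊗ₖ pauli t')) =
      if t = t' then (2:ℂ) else 0 := by
    rw [trace_swap_kron, trace_pauli_mul]
  have huk : Matrix.trace (pauli u ⊗ₖ pauli u') =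
      (if u = 0 then (2:ℂ) else 0) * (if u' = 0 then (2:ℂ) else 0) := by
    rw [Matrix.trace_kronecker, trace_pauli, trace_pauli]
  have hus : Matrix.trace ((pauli u ⊗ₖ pauli u') * swapOp) =
      if u = u' then (2:ℂ) else 0 := by
    rw [trace_kron_swap, trace_pauli_mul]
  rw [Matrix.mul_add, Matrix.trace_add, Matrix.mul_smul, Matrix.mul_smul,
    Matrix.trace_smul, Matrix.trace_smul, Matrix.mul_one, smul_eq_mul, smul_eq_mul,
    htk, hts, huk, hus]
  split_ifs <;> ring

/-- Entries of the PTM of `N† ∘ (conjugation by Wᴴ)`. -/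
def tEnt (N : QMat → QMat) (Wi : QMat) (b v : Fin 4) : ℂ :=
  ∑ t : Fin 4, ptm (hsAdj N) b t * sE Wi t v

set_option maxHeartbeats 2000000 in
lemma ghat_eval (D τ : Fin 3 → ℝ) (U V : QMat) (hU : IsUnitary U) (hV : IsUnitary V)
    (N : QMat → QMat) (hN : IsChannel N)
    (hNform : ∀ ρ, N ρ = U * normalForm D τ (V * ρ * Vᴴ) * Uᴴ)
    {ι : Type*} [Fintype ι] (w : ι → ℝ) (W : ι → QMat) (h2 : IsTwoDesign w W)
    (u u' : Fin 4) :
    ∑ i, (w i : ℂ) *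
        (∑ b : Fin 4, tEnt N (W i) b u * (starRingEnd ℂ) (tEnt N (W i) b u')) =
      if u = u' then (if u = 0 then 1
        else ((((∑ i, D i ^ 2) + ∑ i, τ i ^ 2) / 3 : ℝ) : ℂ)) else 0 := by
  set R : Fin 4 → Fin 4 → ℂ := fun b t => ptm (hsAdj N) b t with hR_def
  set Sc : ℂ := ((((∑ i, D i ^ 2) + ∑ i, τ i ^ 2 : ℝ)) : ℂ) with hSc_def
  have hR0 : ∀ b, R b 0 = if b = 0 then 1 else 0 := by
    intro b
    show ptm (hsAdj N) b 0 = _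
    unfold ptm
    rw [hsAdj_one N hN.tracePreserving, Matrix.mul_one, trace_pauli]
    split <;> norm_num
  have hA1 : ∑ b : Fin 4, ∑ t : Fin 4, R b t * (starRingEnd ℂ) (R b t) = 1 + Sc := by
    rw [hSc_def, ← ptmN_sumsq D τ U V hU hV N hN.linear hNform, Finset.sum_comm]
    refine Finset.sum_congr rfl fun t _ => Finset.sum_congr rfl fun b _ => ?_
    rw [hR_def]
    simp only [ptm_hsAdj N hN.linear]
    rw [Complex.conj_conj]
  have step1 : ∀ i, ∑ b : Fin 4, tEnt N (W i) b u * (starRingEnd ℂ) (tEnt N (W i) b u') =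
      ∑ b : Fin 4, ∑ t : Fin 4, ∑ t' : Fin 4,
        (R b t * (starRingEnd ℂ) (R b t')) *
          (sE (W i) t u * (starRingEnd ℂ) (sE (W i) t' u')) := by
    intro i
    refine Finset.sum_congr rfl fun b _ => ?_
    unfold tEnt
    rw [map_sum, Finset.sum_mul_sum]
    refine Finset.sum_congr rfl fun t _ => Finset.sum_congr rfl fun t' _ => ?_
    rw [_root_.map_mul]
    ring
  have step2 : ∑ i, (w i : ℂ) *
        (∑ b : Fin 4, tEnt N (W i) b u * (starRingEnd ℂ) (tEnt N (W i) b u')) =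
      ∑ b : Fin 4, ∑ t : Fin 4, ∑ t' : Fin 4,
        (R b t * (starRingEnd ℂ) (R b t')) *
          (∑ i, (w i : ℂ) * (sE (W i) t u * (starRingEnd ℂ) (sE (W i) t' u'))) := by
    simp only [step1, Finset.mul_sum]
    rw [Finset.sum_comm (s := (Finset.univ : Finset ι)) (t := (Finset.univ : Finset (Fin 4)))]
    refine Finset.sum_congr rfl fun b _ => ?_
    rw [Finset.sum_comm (s := (Finset.univ : Finset ι)) (t := (Finset.univ : Finset (Fin 4)))]
    refine Finset.sum_congr rfl fun t _ => ?_
    rw [Finset.sum_comm (s := (Finset.univ : Finset ι)) (t := (Finset.univ : Finset (Fin 4)))]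
    refine Finset.sum_congr rfl fun t' _ => ?_
    exact Finset.sum_congr rfl fun i _ => by ring
  rw [step2]
  simp only [design_pair w W h2]
  set c1 : ℂ := (if u = 0 then (1:ℂ) else 0) * (if u' = 0 then (1:ℂ) else 0) with hc1
  set c2 : ℂ := (if u = u' then (1:ℂ) else 0) with hc2
  have key1 : ∀ b, ∑ t : Fin 4, ∑ t' : Fin 4, (R b t * (starRingEnd ℂ) (R b t')) *
      ((if t = 0 then (1:ℂ) else 0) * (if t' = 0 then (1:ℂ) else 0)) =
        R b 0 * (starRingEnd ℂ) (R b 0) := by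
    intro b
    simp [mul_ite, ite_mul, mul_zero, zero_mul, mul_one, one_mul, Finset.sum_ite_eq']
  have key2 : ∀ b, ∑ t : Fin 4, ∑ t' : Fin 4, (R b t * (starRingEnd ℂ) (R b t')) *
      (if t = t' then (1:ℂ) else 0) = ∑ t : Fin 4, R b t * (starRingEnd ℂ) (R b t) := by
    intro b
    refine Finset.sum_congr rfl fun t _ => ?_
    simp [mul_ite, mul_one, mul_zero, Finset.sum_ite_eq]
  have main : ∑ b : Fin 4, ∑ t : Fin 4, ∑ t' : Fin 4,
      (R b t * (starRingEnd ℂ) (R b t')) *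
        (((4 * ((if t = 0 then (1:ℂ) else 0) * (if t' = 0 then (1:ℂ) else 0)) -
            (if t = t' then (1:ℂ) else 0)) / 3) * c1 +
          (((if t = t' then (1:ℂ) else 0) -
            (if t = 0 then (1:ℂ) else 0) * (if t' = 0 then (1:ℂ) else 0)) / 3) * c2) =
      ((4 * c1 - c2) / 3) * 1 + ((c2 - c1) / 3) * (1 + Sc) := by
    have hb : ∀ b, ∑ t : Fin 4, ∑ t' : Fin 4,
        (R b t * (starRingEnd ℂ) (R b t')) *
          (((4 * ((if t = 0 then (1:ℂ) else 0) * (if t' = 0 then (1:ℂ) else 0)) -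
              (if t = t' then (1:ℂ) else 0)) / 3) * c1 +
            (((if t = t' then (1:ℂ) else 0) -
              (if t = 0 then (1:ℂ) else 0) * (if t' = 0 then (1:ℂ) else 0)) / 3) * c2) =
        ((4 * c1 - c2) / 3) * (R b 0 * (starRingEnd ℂ) (R b 0)) +
          ((c2 - c1) / 3) * (∑ t : Fin 4, R b t * (starRingEnd ℂ) (R b t)) := by
      intro b
      rw [← key1 b, ← key2 b, Finset.mul_sum, Finset.mul_sum, ← Finset.sum_add_distrib]
      refine Finset.sum_congr rfl fun t _ => ?_
      rw [Finset.mul_sum, Finset.mul_sum, ← Finset.sum_add_distrib]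
      refine Finset.sum_congr rfl fun t' _ => ?_
      ring
    simp only [hb]
    rw [Finset.sum_add_distrib, ← Finset.mul_sum, ← Finset.mul_sum, hA1]
    congr 1
    have : ∑ b : Fin 4, R b 0 * (starRingEnd ℂ) (R b 0) = 1 := by
      simp [hR0, Fin.sum_univ_four]
    rw [this]
  rw [main, hc1, hc2]
  rcases eq_or_ne u u' with h | h
  · subst h
    rcases eq_or_ne u 0 with h0 | h0
    · subst h0; simp; try ring
    · simp [h0, hSc_def]
      push_cast
      try ring
  · simp [h]
    rcases eq_or_ne u 0 with h0 | h0
    · rcases eq_or_ne u' 0 with h0' | h0'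
      · exact absurd (h0.trans h0'.symm) h
      · simp [h0, h0']
        try ring
    · simp [h0]
      try ring

set_option maxHeartbeats 2000000 in
lemma perF {n : ℕ} (N : QMat → QMat) (a : (Fin n → Fin 4) → ℝ)
    {ι : Type*} [Fintype ι] (W : ι → QMat) (f : Fin n → ι) :
    tensorPow n (hsAdj N) ((qprod fun k => W (f k))ᴴ * obsOf a * qprod fun k => W (f k)) =
      ∑ s : Fin n → Fin 4, (∑ u : Fin n → Fin 4, (a u : ℂ) *
        ∏ k, tEnt N (W (f k)) (s k) (u k)) • pauliString s := by
  unfold tensorPow tensorMap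
  refine Finset.sum_congr rfl fun s _ => ?_
  rw [← Finset.sum_smul]
  congr 1
  -- trace of pauliString times conjugated observable
  have htr : ∀ t u : Fin n → Fin 4,
      Matrix.trace (pauliString t * ((qprod fun k => W (f k))ᴴ * pauliString u *
        qprod fun k => W (f k))) =
      ∏ k, Matrix.trace (pauli (t k) * ((W (f k))ᴴ * pauli (u k) * W (f k))) := by
    intro t u
    rw [pauliString_eq_qprod, pauliString_eq_qprod, qprod_conjT, qprod_mul, qprod_mul,
      qprod_mul, qprod_trace]
  have hM : (qprod fun k => W (f k))ᴴ * obsOf a * qprod (fun k => W (f k)) =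
      ∑ u : Fin n → Fin 4, (a u : ℂ) •
        ((qprod fun k => W (f k))ᴴ * pauliString u * qprod fun k => W (f k)) := by
    unfold obsOf
    simp only [Matrix.mul_sum, Matrix.sum_mul, Matrix.mul_smul, Matrix.smul_mul]
  rw [hM]
  simp only [Matrix.mul_sum, Matrix.trace_sum, Matrix.mul_smul, Matrix.trace_smul,
    smul_eq_mul, Finset.sum_div, htr]
  have h2n : ((2:ℂ)^n) = ∏ _k : Fin n, (2:ℂ) := by simp
  -- LHS : ∑ t (∏ R) * (∑ u a_u ∏ tr / 2^n) ; RHS : ∑ u a_u ∏ tEnt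
  have hfin : ∀ t : Fin n → Fin 4,
      (∏ k, ptm (hsAdj N) (s k) (t k)) * (∑ u : Fin n → Fin 4,
        ((a u : ℂ) * ∏ k, Matrix.trace (pauli (t k) * ((W (f k))ᴴ * pauli (u k) * W (f k)))) /
          (2:ℂ)^n) =
      ∑ u : Fin n → Fin 4, (a u : ℂ) *
        ∏ k, (ptm (hsAdj N) (s k) (t k) * sE (W (f k)) (t k) (u k)) := by
    intro t
    rw [Finset.mul_sum]
    refine Finset.sum_congr rfl fun u _ => ?_
    have : (∏ k, Matrix.trace (pauli (t k) * ((W (f k))ᴴ * pauli (u k) * W (f k)))) / (2:ℂ)^n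
        = ∏ k, sE (W (f k)) (t k) (u k) := by
      rw [h2n, ← Finset.prod_div_distrib]
      rfl
    rw [mul_div_assoc, this, Finset.prod_mul_distrib]
    ring
  calc ∑ t : Fin n → Fin 4, (∏ k, ptm (hsAdj N) (s k) (t k)) *
        (∑ u : Fin n → Fin 4, ((a u : ℂ) *
          ∏ k, Matrix.trace (pauli (t k) * ((W (f k))ᴴ * pauli (u k) * W (f k)))) / (2:ℂ)^n)
      = ∑ t : Fin n → Fin 4, ∑ u : Fin n → Fin 4, (a u : ℂ) *
          ∏ k, (ptm (hsAdj N) (s k) (t k) * sE (W (f k)) (t k) (u k)) :=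
        Finset.sum_congr rfl fun t _ => hfin t
    _ = ∑ u : Fin n → Fin 4, ∑ t : Fin n → Fin 4, (a u : ℂ) *
          ∏ k, (ptm (hsAdj N) (s k) (t k) * sE (W (f k)) (t k) (u k)) := Finset.sum_comm
    _ = ∑ u : Fin n → Fin 4, (a u : ℂ) * ∏ k, tEnt N (W (f k)) (s k) (u k) := by
        refine Finset.sum_congr rfl fun u _ => ?_
        rw [← Finset.mul_sum]
        congr 1
        rw [← Fintype.prod_sum (fun k j => ptm (hsAdj N) (s k) j * sE (W (f k)) j (u k))]
        rfl

set_option maxHeartbeats 2000000 in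
lemma frob_perF {n : ℕ} (N : QMat → QMat) (a : (Fin n → Fin 4) → ℝ)
    {ι : Type*} [Fintype ι] (W : ι → QMat) (f : Fin n → ι) :
    frobSq (tensorPow n (hsAdj N)
        ((qprod fun k => W (f k))ᴴ * obsOf a * qprod fun k => W (f k))) =
      (∑ u : Fin n → Fin 4, ∑ u' : Fin n → Fin 4, ((a u : ℂ) * (a u' : ℂ)) *
        ∏ k, (∑ b : Fin 4, tEnt N (W (f k)) b (u k) *
          (starRingEnd ℂ) (tEnt N (W (f k)) b (u' k)))).re := by
  rw [perF, frobSq_pauli_sum]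
  congr 1
  calc ∑ s : Fin n → Fin 4,
        (starRingEnd ℂ) (∑ u : Fin n → Fin 4, (a u : ℂ) * ∏ k, tEnt N (W (f k)) (s k) (u k)) *
          (∑ u : Fin n → Fin 4, (a u : ℂ) * ∏ k, tEnt N (W (f k)) (s k) (u k))
      = ∑ s : Fin n → Fin 4, ∑ u : Fin n → Fin 4, ∑ u' : Fin n → Fin 4,
          ((a u : ℂ) * (a u' : ℂ)) *
            ∏ k, (tEnt N (W (f k)) (s k) (u k) *
              (starRingEnd ℂ) (tEnt N (W (f k)) (s k) (u' k))) := by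
        refine Finset.sum_congr rfl fun s _ => ?_
        rw [map_sum, Finset.sum_mul_sum, Finset.sum_comm]
        refine Finset.sum_congr rfl fun u _ => Finset.sum_congr rfl fun u' _ => ?_
        rw [_root_.map_mul, map_prod, Complex.conj_ofReal, Finset.prod_mul_distrib]
        ring
    _ = ∑ u : Fin n → Fin 4, ∑ u' : Fin n → Fin 4, ((a u : ℂ) * (a u' : ℂ)) *
          ∑ s : Fin n → Fin 4, ∏ k, (tEnt N (W (f k)) (s k) (u k) *
            (starRingEnd ℂ) (tEnt N (W (f k)) (s k) (u' k))) := by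
        rw [Finset.sum_comm]
        refine Finset.sum_congr rfl fun u _ => ?_
        rw [Finset.sum_comm]
        refine Finset.sum_congr rfl fun u' _ => ?_
        rw [Finset.mul_sum]
    _ = ∑ u : Fin n → Fin 4, ∑ u' : Fin n → Fin 4, ((a u : ℂ) * (a u' : ℂ)) *
          ∏ k, (∑ b : Fin 4, tEnt N (W (f k)) b (u k) *
            (starRingEnd ℂ) (tEnt N (W (f k)) b (u' k))) := by
        refine Finset.sum_congr rfl fun u _ => Finset.sum_congr rfl fun u' _ => ?_
        congr 1
        rw [← Fintype.prod_sum (fun k b => tEnt N (W (f k)) b (u k) *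
          (starRingEnd ℂ) (tEnt N (W (f k)) b (u' k)))]

set_option maxHeartbeats 4000000

/-- (Mean squared contraction under a unitary 2-design.)
For a channel `N = U N'(V·Vᴴ) Uᴴ` and `D_s` a unitary 2-design,
`E_{W ~ D_s^{⊗n}} ‖N^{†⊗n}(Wᴴ O_A W)‖_F² = ((‖D‖₂² + ‖t‖₂²)/3)^{|A|}·‖O_A‖_F²`. -/
theorem stmt_3 (n : ℕ) (D t : Fin 3 → ℝ) (U V : QMat)
    (hU : IsUnitary U) (hV : IsUnitary V)
    (N : QMat → QMat) (hN : IsChannel N)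
    (hNform : ∀ ρ, N ρ = U * normalForm D t (V * ρ * Vᴴ) * Uᴴ)
    {ι : Type*} [Fintype ι] (w : ι → ℝ) (W : ι → QMat)
    (hw0 : ∀ i, 0 ≤ w i) (hw1 : ∑ i, w i = 1)
    (hWu : ∀ i, IsUnitary (W i)) (h2 : IsTwoDesign w W)
    (A : Finset (Fin n)) (hA : A.Nonempty)
    (a : (Fin n → Fin 4) → ℝ) (ha : ∀ s, psupp s ≠ A → a s = 0) :
    ∑ f : Fin n → ι, (∏ k, w (f k)) *
        frobSq (tensorPow n (hsAdj N)
          ((qprod fun k => W (f k))ᴴ * obsOf a * qprod fun k => W (f k))) =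
      (((∑ i, D i ^ 2) + ∑ i, t i ^ 2) / 3) ^ A.card * frobSq (obsOf a) := by
  classical
  have hG := ghat_eval D t U V hU hV N hN hNform w W h2
  have hprod : ∀ u u' : Fin n → Fin 4,
      (∏ k, if u k = u' k then (if u k = 0 then (1:ℂ)
          else ((((∑ i, D i ^ 2) + ∑ i, t i ^ 2) / 3 : ℝ) : ℂ)) else 0) =
        if u = u' then ((((∑ i, D i ^ 2) + ∑ i, t i ^ 2) / 3 : ℝ) : ℂ) ^ (psupp u).card
          else 0 := by
    intro u u'
    rcases eq_or_ne u u' with rfl | h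
    · simp only [eq_self_iff_true, if_true]
      have : ∀ k, (if u k = 0 then (1:ℂ)
          else ((((∑ i, D i ^ 2) + ∑ i, t i ^ 2) / 3 : ℝ) : ℂ)) =
          (if k ∈ psupp u then ((((∑ i, D i ^ 2) + ∑ i, t i ^ 2) / 3 : ℝ) : ℂ) else 1) := by
        intro k
        simp only [psupp, Finset.mem_filter, Finset.mem_univ, true_and]
        by_cases hk : u k = 0 <;> simp [hk]
      simp only [this]
      rw [Fintype.prod_ite_mem, Finset.prod_const]
    · rw [if_neg h]
      obtain ⟨k, hk⟩ := Function.ne_iff.mp h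
      exact Finset.prod_eq_zero (Finset.mem_univ k) (if_neg hk)
  have keyC : (∑ f : Fin n → ι, ((∏ k, w (f k) : ℝ) : ℂ) *
      (∑ u : Fin n → Fin 4, ∑ u' : Fin n → Fin 4, ((a u : ℂ) * (a u' : ℂ)) *
        ∏ k, (∑ b : Fin 4, tEnt N (W (f k)) b (u k) *
          (starRingEnd ℂ) (tEnt N (W (f k)) b (u' k))))) =
      ((((∑ i, D i ^ 2) + ∑ i, t i ^ 2) / 3 : ℝ) : ℂ) ^ A.card *
        ∑ u : Fin n → Fin 4, ((a u : ℂ)) ^ 2 := by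
    calc (∑ f : Fin n → ι, ((∏ k, w (f k) : ℝ) : ℂ) *
        (∑ u : Fin n → Fin 4, ∑ u' : Fin n → Fin 4, ((a u : ℂ) * (a u' : ℂ)) *
          ∏ k, (∑ b : Fin 4, tEnt N (W (f k)) b (u k) *
            (starRingEnd ℂ) (tEnt N (W (f k)) b (u' k)))))
        = ∑ u : Fin n → Fin 4, ∑ u' : Fin n → Fin 4, ((a u : ℂ) * (a u' : ℂ)) *
            ∑ f : Fin n → ι, ∏ k, ((w (f k) : ℂ) *
              (∑ b : Fin 4, tEnt N (W (f k)) b (u k) *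
                (starRingEnd ℂ) (tEnt N (W (f k)) b (u' k)))) := by
          have e1 : ∀ f : Fin n → ι, ((∏ k, w (f k) : ℝ) : ℂ) *
              (∑ u : Fin n → Fin 4, ∑ u' : Fin n → Fin 4, ((a u : ℂ) * (a u' : ℂ)) *
                ∏ k, (∑ b : Fin 4, tEnt N (W (f k)) b (u k) *
                  (starRingEnd ℂ) (tEnt N (W (f k)) b (u' k)))) =
              ∑ u : Fin n → Fin 4, ∑ u' : Fin n → Fin 4,
                ((∏ k, w (f k) : ℝ) : ℂ) * (((a u : ℂ) * (a u' : ℂ)) *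
                  ∏ k, (∑ b : Fin 4, tEnt N (W (f k)) b (u k) *
                    (starRingEnd ℂ) (tEnt N (W (f k)) b (u' k)))) := by
            intro f
            rw [Finset.mul_sum]
            exact Finset.sum_congr rfl fun u _ => Finset.mul_sum _ _ _
          simp only [e1]
          rw [Finset.sum_comm (s := (Finset.univ : Finset (Fin n → ι)))
            (t := (Finset.univ : Finset (Fin n → Fin 4)))]
          refine Finset.sum_congr rfl fun u _ => ?_
          rw [Finset.sum_comm (s := (Finset.univ : Finset (Fin n → ι)))
            (t := (Finset.univ : Finset (Fin n → Fin 4)))]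
          refine Finset.sum_congr rfl fun u' _ => ?_
          rw [Finset.mul_sum]
          refine Finset.sum_congr rfl fun f _ => ?_
          rw [Complex.ofReal_prod, Finset.prod_mul_distrib]
          ring
      _ = ∑ u : Fin n → Fin 4, ∑ u' : Fin n → Fin 4, ((a u : ℂ) * (a u' : ℂ)) *
            ∏ k, ∑ i, ((w i : ℂ) *
              (∑ b : Fin 4, tEnt N (W i) b (u k) *
                (starRingEnd ℂ) (tEnt N (W i) b (u' k)))) := by
          refine Finset.sum_congr rfl fun u _ => Finset.sum_congr rfl fun u' _ => ?_
          congr 1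
          rw [← Fintype.prod_sum (fun k i => (w i : ℂ) *
            (∑ b : Fin 4, tEnt N (W i) b (u k) *
              (starRingEnd ℂ) (tEnt N (W i) b (u' k))))]
      _ = ∑ u : Fin n → Fin 4, ∑ u' : Fin n → Fin 4, ((a u : ℂ) * (a u' : ℂ)) *
            (if u = u' then ((((∑ i, D i ^ 2) + ∑ i, t i ^ 2) / 3 : ℝ) : ℂ) ^
              (psupp u).card else 0) := by
          refine Finset.sum_congr rfl fun u _ => Finset.sum_congr rfl fun u' _ => ?_
          congr 1
          rw [← hprod u u']
          exact Finset.prod_congr rfl fun k _ => hG (u k) (u' k)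
      _ = ∑ u : Fin n → Fin 4, ((a u : ℂ) * (a u : ℂ)) *
            ((((∑ i, D i ^ 2) + ∑ i, t i ^ 2) / 3 : ℝ) : ℂ) ^ (psupp u).card := by
          refine Finset.sum_congr rfl fun u _ => ?_
          simp [mul_ite, mul_zero, Finset.sum_ite_eq]
      _ = ((((∑ i, D i ^ 2) + ∑ i, t i ^ 2) / 3 : ℝ) : ℂ) ^ A.card *
            ∑ u : Fin n → Fin 4, ((a u : ℂ)) ^ 2 := by
          rw [Finset.mul_sum]
          refine Finset.sum_congr rfl fun u _ => ?_
          rcases eq_or_ne (a u) 0 with h0 | h0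
          · simp [h0]
          · have hsupp : psupp u = A := by
              by_contra hc
              exact h0 (ha u hc)
            rw [hsupp]
            ring
  calc ∑ f : Fin n → ι, (∏ k, w (f k)) *
        frobSq (tensorPow n (hsAdj N)
          ((qprod fun k => W (f k))ᴴ * obsOf a * qprod fun k => W (f k)))
      = (∑ f : Fin n → ι, ((∏ k, w (f k) : ℝ) : ℂ) *
          (∑ u : Fin n → Fin 4, ∑ u' : Fin n → Fin 4, ((a u : ℂ) * (a u' : ℂ)) *
            ∏ k, (∑ b : Fin 4, tEnt N (W (f k)) b (u k) *
              (starRingEnd ℂ) (tEnt N (W (f k)) b (u' k))))).re := by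
        rw [Complex.re_sum]
        refine Finset.sum_congr rfl fun f _ => ?_
        rw [frob_perF N a W f, Complex.re_ofReal_mul]
    _ = (((((∑ i, D i ^ 2) + ∑ i, t i ^ 2) / 3 : ℝ) : ℂ) ^ A.card *
          ∑ u : Fin n → Fin 4, ((a u : ℂ)) ^ 2).re := by rw [keyC]
    _ = (((∑ i, D i ^ 2) + ∑ i, t i ^ 2) / 3) ^ A.card * ∑ u : Fin n → Fin 4, (a u) ^ 2
        := by
        rw [show ((((∑ i, D i ^ 2) + ∑ i, t i ^ 2) / 3 : ℝ) : ℂ) ^ A.card *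
            (∑ u : Fin n → Fin 4, ((a u : ℂ)) ^ 2) =
            (((((∑ i, D i ^ 2) + ∑ i, t i ^ 2) / 3) ^ A.card *
              ∑ u : Fin n → Fin 4, (a u) ^ 2 : ℝ) : ℂ) by push_cast; ring]
        rw [Complex.ofReal_re]
    _ = (((∑ i, D i ^ 2) + ∑ i, t i ^ 2) / 3) ^ A.card * frobSq (obsOf a) := by
        congr 1
        have hobs : frobSq (obsOf a) =
            (∑ s : Fin n → Fin 4, (starRingEnd ℂ) ((a s : ℂ)) * (a s : ℂ)).re :=
          frobSq_pauli_sum (fun s => ((a s : ℝ) : ℂ))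
        rw [hobs, show (∑ s : Fin n → Fin 4, (starRingEnd ℂ) ((a s : ℂ)) * (a s : ℂ)) =
          ((∑ s : Fin n → Fin 4, (a s) ^ 2 : ℝ) : ℂ) by
            push_cast [Complex.conj_ofReal]; refine Finset.sum_congr rfl fun s _ => by ring]
        rw [Complex.ofReal_re]

end
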